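/- Let G be a finite abelian group of order n such that 3 divides n and n is not divisible by any prime p with p ≡ 2 (mod 3). Then f_max(G) ≥ 2^{(n−9)/6}. -/

import Mathlib

/-- `S` is a sum-free subset of the abelian group `G`: no `x, y, z ∈ S` with `x + y = z`. -/
def SumFreeG {G : Type*} [AddCommGroup G] (S : Finset G) : Prop :=
  ∀ x ∈ S, ∀ y ∈ S, x + y ∉ S

/-- `M` is a maximal sum-free subset of the abelian group `G`. -/
def MaxSFG {G : Type*} [AddCommGroup G] (M : Finset G) : Prop :=
  SumFreeG M ∧ ∀ M' : Finset G, SumFreeG M' → M ⊆ M' → M = M'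

/-- The number of maximal sum-free subsets of `G`. -/
noncomputable def fmaxG (G : Type*) [AddCommGroup G] : ℕ :=
  Set.ncard {M : Finset G | MaxSFG M}


open Finset

-- test hom existence
lemma exists_surj_hom_zmod3 {G : Type*} [AddCommGroup G] [Fintype G] (h3 : 3 ∣ Fintype.card G) :
    ∃ φ : G →+ ZMod 3, Function.Surjective φ := by
  classical
  obtain ⟨ι, hι, n, hn, ⟨e⟩⟩ := AddCommGroup.equiv_directSum_zmod_of_finite' G
  haveI : ∀ i, NeZero (n i) := fun i => ⟨by have := hn i; omega⟩
  have hcard : Fintype.card G = ∏ i, n i := by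
    rw [Fintype.card_congr (e.toEquiv.trans (DFinsupp.equivFunOnFintype))]
    simp [Fintype.card_pi, ZMod.card]
  have h3' : (3:ℕ) ∣ ∏ i, n i := hcard ▸ h3
  obtain ⟨i, -, hdvd⟩ := (Prime.dvd_finset_prod_iff (Nat.prime_iff.mp Nat.prime_three) n).mp h3'
  let ψ : ZMod (n i) →+* ZMod 3 := ZMod.castHom hdvd (ZMod 3)
  refine ⟨{ toFun := fun x => ψ ((e x) i), map_zero' := by simp, map_add' := by intro a b; simp },
    ?_⟩
  intro y
  refine ⟨e.symm (DirectSum.of _ i ((y.val : ZMod (n i)))), ?_⟩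
  simp only [AddMonoidHom.coe_mk, ZeroHom.coe_mk, AddEquiv.apply_symm_apply]
  rw [DirectSum.of_eq_same, map_natCast]
  exact ZMod.natCast_rightInverse y


lemma card_three_mul {G : Type*} [AddCommGroup G] [Fintype G] [DecidableEq G]
    (φ : G →+ ZMod 3) (hφ : Function.Surjective φ) :
    Fintype.card G = 3 * (Finset.univ.filter (fun x : G => φ x = 1)).card := by
  have hfib : ∀ j : ZMod 3, (Finset.univ.filter (fun x : G => φ x = j)).card
      = (Finset.univ.filter (fun x : G => φ x = 1)).card := by
    intro j
    obtain ⟨d, hd⟩ := hφ (j - 1)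
    apply Finset.card_bij' (fun y _ => y - d) (fun x _ => x + d)
    · intro a ha
      simp only [Finset.mem_filter, Finset.mem_univ, true_and] at ha ⊢
      rw [map_sub, ha, hd]; ring
    · intro a ha
      simp only [Finset.mem_filter, Finset.mem_univ, true_and] at ha ⊢
      rw [map_add, ha, hd]; ring
    · intro a _; abel
    · intro a _; abel
  have h := Finset.card_eq_sum_card_fiberwise
    (s := (Finset.univ : Finset G)) (t := (Finset.univ : Finset (ZMod 3)))
    (f := fun x => φ x) (fun x _ => Finset.mem_univ _)
  rw [Finset.card_univ] at h
  rw [h, Finset.sum_congr rfl (fun j _ => hfib j), Finset.sum_const, Finset.card_univ,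
    ZMod.card, smul_eq_mul]

lemma pairing {G : Type*} [AddCommGroup G] [DecidableEq G] (c : G) :
    ∀ D : Finset G, (∀ x ∈ D, c - x ∈ D) → (∀ x ∈ D, c - x ≠ x) →
      ∃ R : Finset G, R ⊆ D ∧ (∀ x ∈ R, c - x ∉ R) ∧ D.card ≤ 2 * R.card := by
  intro D
  induction D using Finset.strongInduction with
  | _ D ih =>
    intro hinv hfix
    rcases D.eq_empty_or_nonempty with rfl | ⟨x, hx⟩
    · exact ⟨∅, by simp⟩
    · have hcx : c - x ∈ D := hinv x hx
      have hne : c - x ≠ x := hfix x hx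
      have hpair : ({x, c - x} : Finset G) ⊆ D := by
        intro z hz; rcases Finset.mem_insert.mp hz with rfl | hz
        · exact hx
        · rw [Finset.mem_singleton] at hz; exact hz ▸ hcx
      have hss : D \ {x, c - x} ⊂ D :=
        Finset.sdiff_ssubset hpair ⟨x, Finset.mem_insert_self _ _⟩
      obtain ⟨R', h1, h2, h3⟩ := ih _ hss
        (by
          intro y hy
          rw [Finset.mem_sdiff] at hy ⊢
          refine ⟨hinv y hy.1, ?_⟩
          intro hmem
          rcases Finset.mem_insert.mp hmem with h | h
          · exact hy.2 (by simp [show y = c - x from by rw [← h]; abel])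
          · rw [Finset.mem_singleton] at h
            exact hy.2 (by simp [show y = x from by
              have : c - y = c - x := h
              have := sub_right_injective (G := G)  this
              exact this])
        )
        (fun y hy => hfix y (Finset.mem_sdiff.mp hy).1)
      have hR'D' : ∀ y ∈ R', y ∈ D ∧ y ∉ ({x, c - x} : Finset G) :=
        fun y hy => Finset.mem_sdiff.mp (h1 hy)
      have hxR' : x ∉ R' := fun h => (hR'D' x h).2 (Finset.mem_insert_self _ _)
      refine ⟨insert x R', ?_, ?_, ?_⟩
      · intro y hy
        rcases Finset.mem_insert.mp hy with rfl | hy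
        · exact hx
        · exact (hR'D' y hy).1
      · intro y hy hcy
        rcases Finset.mem_insert.mp hy with rfl | hy
        · rcases Finset.mem_insert.mp hcy with h | h
          · exact hne h
          · exact (hR'D' _ h).2 (by simp)
        · rcases Finset.mem_insert.mp hcy with h | h
          · exact (hR'D' y hy).2 (by simp [show y = c - x from by rw [← h]; abel])
          · exact h2 y hy h
      · have hle : 2 ≤ D.card := by
          calc 2 = ({x, c - x} : Finset G).card := by
                rw [Finset.card_insert_of_notMem (by simp [Ne.symm hne]), Finset.card_singleton]
            _ ≤ D.card := Finset.card_le_card hpair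
        have hcard : (D \ {x, c - x}).card = D.card - 2 := by
          rw [Finset.card_sdiff_of_subset hpair, Finset.card_insert_of_notMem (by simp [Ne.symm hne]),
            Finset.card_singleton]
        rw [Finset.card_insert_of_notMem hxR']
        omega

lemma exists_maxsf_ext {G : Type*} [AddCommGroup G] [Fintype G] (S : Finset G)
    (hS : SumFreeG S) : ∃ M : Finset G, MaxSFG M ∧ S ⊆ M := by
  classical
  have hne : (Finset.univ.filter (fun M : Finset G => SumFreeG M ∧ S ⊆ M)).Nonempty :=
    ⟨S, by simp [hS]⟩
  obtain ⟨M, hM, hmax⟩ := Finset.exists_maximal hne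
  simp only [Finset.mem_filter, Finset.mem_univ, true_and] at hM
  refine ⟨M, ⟨hM.1, fun M' hM' hsub => ?_⟩, hM.2⟩
  by_contra hne'
  have hmem : M' ∈ Finset.univ.filter (fun M : Finset G => SumFreeG M ∧ S ⊆ M) := by
    simp only [Finset.mem_filter, Finset.mem_univ, true_and]
    exact ⟨hM', hM.2.trans hsub⟩
  exact hne' (le_antisymm hsub (hmax hmem hsub))

lemma ST_sumfree {G : Type*} [AddCommGroup G] [DecidableEq G]
    (φ : G →+ ZMod 3) (c : G) (hc : φ c = 2)
    (R T : Finset G) (hT : T ⊆ R) (hR1 : ∀ x ∈ R, φ x = 1)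
    (hRfree : ∀ x ∈ R, c - x ∉ R) (hcc : c + c ∉ R) (hnc : -c ∉ R) :
    SumFreeG (insert c (T ∪ (R \ T).image (fun x => c - x))) := by
  set W := T ∪ (R \ T).image (fun x => c - x) with hW
  have hW1 : ∀ s ∈ W, φ s = 1 := by
    intro s hs
    rw [hW, Finset.mem_union] at hs
    rcases hs with hs | hs
    · exact hR1 s (hT hs)
    · obtain ⟨u, hu, rfl⟩ := Finset.mem_image.mp hs
      rw [Finset.mem_sdiff] at hu
      rw [map_sub, hc, hR1 u hu.1]; decide
  have hWc : ∀ a ∈ W, ∀ b ∈ W, a + b ≠ c := by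
    intro a ha b hb hab
    rw [hW, Finset.mem_union] at ha hb
    rcases ha with ha | ha <;> rcases hb with hb | hb
    · have hb' : b = c - a := by rw [← hab]; abel
      exact hRfree a (hT ha) (hb' ▸ hT hb)
    · obtain ⟨u, hu, rfl⟩ := Finset.mem_image.mp hb
      rw [Finset.mem_sdiff] at hu
      have hau : a = u := by
        have h2 : a - u = a + (c - u) - c := by abel
        rw [hab, sub_self] at h2
        exact sub_eq_zero.mp h2
      exact hu.2 (hau ▸ ha)
    · obtain ⟨u, hu, rfl⟩ := Finset.mem_image.mp ha
      rw [Finset.mem_sdiff] at hu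
      have hbu : b = u := by
        have h2 : b - u = (c - u) + b - c := by abel
        rw [hab, sub_self] at h2
        exact sub_eq_zero.mp h2
      exact hu.2 (hbu ▸ hb)
    · obtain ⟨u, hu, rfl⟩ := Finset.mem_image.mp ha
      obtain ⟨v, hv, rfl⟩ := Finset.mem_image.mp hb
      rw [Finset.mem_sdiff] at hu hv
      have hvc : c - v = u := by
        have h2 : (c - v) - u = (c - u) + (c - v) - c := by abel
        rw [hab, sub_self] at h2
        exact sub_eq_zero.mp h2
      exact hRfree v hv.1 (hvc ▸ hu.1)
  intro x hx y hy hz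
  rw [Finset.mem_insert] at hx hy hz
  rcases hx with hxc | hx <;> rcases hy with hyc | hy
  · rw [hxc, hyc] at hz
    rcases hz with h | h
    · have hc0 : c = 0 := add_eq_left.mp h
      rw [hc0, map_zero] at hc
      exact absurd hc (by decide)
    · rw [hW, Finset.mem_union] at h
      rcases h with h | h
      · exact hcc (hT h)
      · obtain ⟨u, hu, huu⟩ := Finset.mem_image.mp h
        rw [Finset.mem_sdiff] at hu
        have hun : u = -c := by
          have h2 : u - (-c) = (c + c) - (c - u) := by abel
          rw [← huu, sub_self] at h2
          exact sub_eq_zero.mp h2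
        exact hnc (hun ▸ hu.1)
  · have h1 : φ (x + y) = 0 := by rw [map_add, hxc, hc, hW1 y hy]; decide
    rcases hz with h | h
    · rw [h, hc] at h1; exact absurd h1 (by decide)
    · rw [hW1 _ h] at h1; exact absurd h1 (by decide)
  · have h1 : φ (x + y) = 0 := by rw [map_add, hyc, hc, hW1 x hx]; decide
    rcases hz with h | h
    · rw [h, hc] at h1; exact absurd h1 (by decide)
    · rw [hW1 _ h] at h1; exact absurd h1 (by decide)
  · rcases hz with h | h
    · exact hWc x hx y hy h
    · have h1 : φ (x + y) = 2 := by rw [map_add, hW1 x hx, hW1 y hy]; decide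
      rw [hW1 _ h] at h1; exact absurd h1 (by decide)

/-- If `G` is a finite abelian group of order `n` with `3 ∣ n` and no prime divisor
`p ≡ 2 (mod 3)`, then `f_max(G) ≥ 2^{(n − 9)/6}`. -/
theorem fmax_group_lower_three {G : Type*} [AddCommGroup G] [Fintype G]
    (h3 : 3 ∣ Fintype.card G)
    (hp : ∀ p : ℕ, p.Prime → p ∣ Fintype.card G → p % 3 ≠ 2) :
    (2 : ℝ) ^ (((Fintype.card G : ℝ) - 9) / 6) ≤ (fmaxG G : ℝ) := by
  classical
  obtain ⟨φ, hφ⟩ := exists_surj_hom_zmod3 h3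
  obtain ⟨c, hc⟩ := hφ 2
  set B : Finset G := Finset.univ.filter (fun x : G => φ x = 1) with hB
  have hnm : Fintype.card G = 3 * B.card := by rw [hB]; exact card_three_mul φ hφ
  have hodd : Fintype.card G % 2 = 1 := by
    rcases Nat.even_or_odd (Fintype.card G) with h | h
    · exact absurd (by norm_num : (2:ℕ) % 3 = 2) (hp 2 Nat.prime_two h.two_dvd)
    · obtain ⟨k, hk⟩ := h
      omega
  have key : ∀ x : G, ((Fintype.card G + 1)/2) • (x + x) = x := by
    intro x
    rw [← two_nsmul, ← mul_nsmul,
      (by omega : 2 * ((Fintype.card G + 1)/2) = Fintype.card G + 1),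
      succ_nsmul, card_nsmul_eq_zero, zero_add]
  have hdinj : ∀ x y : G, x + x = y + y → x = y := fun x y h => by
    rw [← key x, h, key y]
  set b₀ : G := ((Fintype.card G + 1)/2) • c with hb₀def
  have hb₀ : b₀ + b₀ = c := by
    rw [hb₀def, ← add_nsmul,
      (by omega : (Fintype.card G + 1)/2 + (Fintype.card G + 1)/2 = Fintype.card G + 1),
      succ_nsmul, card_nsmul_eq_zero, zero_add]
  set D : Finset G := B.filter (fun x => x + x ≠ c ∧ x ≠ c + c ∧ x ≠ -c) with hD
  have hmemD : ∀ x, x ∈ D ↔ (φ x = 1 ∧ (x + x ≠ c ∧ x ≠ c + c ∧ x ≠ -c)) := by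
    intro x
    rw [hD, Finset.mem_filter, hB, Finset.mem_filter]
    simp only [Finset.mem_univ, true_and]
  have hinv : ∀ x ∈ D, c - x ∈ D := by
    intro x hx
    rw [hmemD] at hx ⊢
    obtain ⟨h1, h2, h3, h4⟩ := hx
    refine ⟨by rw [map_sub, hc, h1]; decide, ?_, ?_, ?_⟩
    · intro h
      apply h2
      have h5 : (x + x) - c = c - ((c - x) + (c - x)) := by abel
      rw [h, sub_self] at h5
      exact sub_eq_zero.mp h5
    · intro h
      apply h4
      have h5 : x - (-c) = (c + c) - (c - x) := by abel
      rw [← h, sub_self] at h5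
      exact sub_eq_zero.mp h5
    · intro h
      apply h3
      have h5 : x - (c + c) = (-c) - (c - x) := by abel
      rw [← h, sub_self] at h5
      exact sub_eq_zero.mp h5
  have hfix : ∀ x ∈ D, c - x ≠ x := by
    intro x hx h
    apply ((hmemD x).mp hx).2.1
    have h5 : (x + x) - c = x - (c - x) := by abel
    rw [h, sub_self] at h5
    exact sub_eq_zero.mp h5
  have hsub3 : B \ D ⊆ {b₀, c + c, -c} := by
    intro x hx
    rw [Finset.mem_sdiff] at hx
    obtain ⟨hxB, hxD⟩ := hx
    have h1 : φ x = 1 := by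
      rw [hB, Finset.mem_filter] at hxB; exact hxB.2
    rw [hmemD] at hxD
    push_neg at hxD
    rcases em (x + x = c) with h | h
    · have : x = b₀ := hdinj x b₀ (by rw [h, hb₀])
      simp [this]
    · rcases em (x = c + c) with h' | h'
      · simp [h']
      · simp [hxD h1 h h']
  have hcard3 : B.card ≤ D.card + 3 := by
    have h1 : (B \ D).card ≤ 3 := by
      refine le_trans (Finset.card_le_card hsub3) ?_
      refine le_trans (Finset.card_insert_le _ _) (Nat.succ_le_succ ?_)
      refine le_trans (Finset.card_insert_le _ _) (Nat.succ_le_succ ?_)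
      exact (Finset.card_singleton _).le
    have h2 : B.card ≤ (B \ D).card + D.card := Finset.card_le_card_sdiff_add_card
    omega
  obtain ⟨R, hRD, hRfree, hRcard⟩ := pairing c D hinv hfix
  have hR1 : ∀ x ∈ R, φ x = 1 := fun x hx => ((hmemD x).mp (hRD hx)).1
  have hcc : c + c ∉ R := fun h => ((hmemD _).mp (hRD h)).2.2.1 rfl
  have hnc : -c ∉ R := fun h => ((hmemD _).mp (hRD h)).2.2.2 rfl
  have hex : ∀ T : Finset G, ∃ M : Finset G, T ⊆ R →
      (MaxSFG M ∧ insert c (T ∪ (R \ T).image (fun x => c - x)) ⊆ M) := by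
    intro T
    by_cases hT : T ⊆ R
    · obtain ⟨M, h1, h2⟩ := exists_maxsf_ext _ (ST_sumfree φ c hc R T hT hR1 hRfree hcc hnc)
      exact ⟨M, fun _ => ⟨h1, h2⟩⟩
    · exact ⟨∅, fun h => absurd h hT⟩
  choose F hF using hex
  have hFT : ∀ T, T ⊆ R → R.filter (fun x => x ∈ F T) = T := by
    intro T hT
    obtain ⟨⟨hsf, -⟩, hsub⟩ := hF T hT
    ext x
    simp only [Finset.mem_filter]
    constructor
    · rintro ⟨hxR, hxM⟩
      by_contra hxT
      have h1 : c - x ∈ F T := hsub (Finset.mem_insert_of_mem (Finset.mem_union_right _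
        (Finset.mem_image.mpr ⟨x, Finset.mem_sdiff.mpr ⟨hxR, hxT⟩, rfl⟩)))
      have h2 : c ∈ F T := hsub (Finset.mem_insert_self _ _)
      have h3 := hsf x hxM (c - x) h1
      rw [show x + (c - x) = c from by abel] at h3
      exact h3 h2
    · intro hxT
      exact ⟨hT hxT, hsub (Finset.mem_insert_of_mem (Finset.mem_union_left _ hxT))⟩
  set P : Finset (Finset G) := Finset.univ.filter (fun M : Finset G => MaxSFG M) with hP
  have hcount : 2 ^ R.card ≤ P.card := by
    rw [← Finset.card_powerset]
    refine Finset.card_le_card_of_injOn F ?_ ?_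
    · intro T hT
      rw [Finset.mem_coe, Finset.mem_powerset] at hT
      rw [hP, Finset.mem_coe, Finset.mem_filter]
      exact ⟨Finset.mem_univ _, (hF T hT).1⟩
    · intro T hT T' hT' h
      rw [Finset.mem_coe, Finset.mem_powerset] at hT hT'
      rw [← hFT T hT, ← hFT T' hT', h]
  have hfmax : fmaxG G = P.card := by
    rw [fmaxG]
    have hPs : {M : Finset G | MaxSFG M} = ↑P := by
      ext M
      simp [hP]
    rw [hPs, Set.ncard_coe_finset]
  have hRineq : ((Fintype.card G : ℝ) - 9) / 6 ≤ (R.card : ℝ) := by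
    have h1 : Fintype.card G ≤ 6 * R.card + 9 := by omega
    have h2 := (Nat.cast_le (α := ℝ)).mpr h1
    push_cast at h2
    linarith
  calc (2:ℝ) ^ (((Fintype.card G : ℝ) - 9)/6)
      ≤ (2:ℝ) ^ ((R.card : ℕ) : ℝ) := Real.rpow_le_rpow_of_exponent_le one_le_two hRineq
    _ = ((2 ^ R.card : ℕ) : ℝ) := by rw [Real.rpow_natCast]; push_cast; ring
    _ ≤ ((P.card : ℕ) : ℝ) := by exact_mod_cast hcount
    _ = (fmaxG G : ℝ) := by rw [hfmax]
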